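/- Suppose b = 1 and τ = ε + a. Then the second complex derivative of the entire function λ ↦ Δ(λ, τ) at λ = 0 equals 2 − (ε² − a²), while Δ(0, τ) = 0 and the first derivative at 0 vanishes. Consequently, λ = 0 is a zero of order exactly two of λ ↦ Δ(λ, τ) if and only if ε² − a² ≠ 2. -/

import Mathlib

open Complex

/-- The characteristic function Δ(λ, τ) = λ² − ελ + 1 − (aλ + b)·exp(−λτ) of the
linearized van der Pol equation with delayed feedback. -/
noncomputable def charFn (ε a b τ : ℝ) (lam : ℂ) : ℂ :=
  lam ^ 2 - (ε : ℂ) * lam + 1 - ((a : ℂ) * lam + (b : ℂ)) * Complex.exp (-lam * (τ : ℂ))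

/-- `z` is a zero of order exactly `n` of `f`: the derivatives of order `< n` all vanish
at `z`, and the `n`-th derivative does not. -/
def IsZeroOfOrderExactly (f : ℂ → ℂ) (z : ℂ) (n : ℕ) : Prop :=
  (∀ k < n, iteratedDeriv k f z = 0) ∧ iteratedDeriv n f z ≠ 0

lemma charFn_hasDerivAt (ε a b τ : ℝ) (z : ℂ) :
    HasDerivAt (charFn ε a b τ)
      (2 * z - (ε : ℂ) - ((a : ℂ) + ((a : ℂ) * z + (b : ℂ)) * (-(τ : ℂ))) *
        Complex.exp (-z * (τ : ℂ))) z := by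
  have hexp : HasDerivAt (fun w : ℂ => Complex.exp (-w * (τ : ℂ)))
      (Complex.exp (-z * (τ : ℂ)) * (-(τ : ℂ))) z := by
    have h1 : HasDerivAt (fun w : ℂ => -w * (τ : ℂ)) (-(τ : ℂ)) z := by
      simpa using ((hasDerivAt_id z).neg.mul_const (τ : ℂ))
    simpa using h1.cexp
  have hlin : HasDerivAt (fun w : ℂ => (a : ℂ) * w + (b : ℂ)) (a : ℂ) z := by
    simpa using ((hasDerivAt_id z).const_mul (a : ℂ)).add_const (b : ℂ)
  have hprod := hlin.mul hexp
  have hpoly : HasDerivAt (fun w : ℂ => w ^ 2 - (ε : ℂ) * w + 1)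
      (2 * z - (ε : ℂ)) z := by
    have := ((hasDerivAt_pow 2 z).sub ((hasDerivAt_id z).const_mul (ε : ℂ))).add_const
      (1 : ℂ)
    simpa [mul_comm] using this
  have : HasDerivAt (charFn ε a b τ) _ z := hpoly.sub hprod
  convert this using 1
  ring

lemma charFn_deriv (ε a b τ : ℝ) :
    deriv (charFn ε a b τ) = fun z =>
      2 * z - (ε : ℂ) - ((a : ℂ) + ((a : ℂ) * z + (b : ℂ)) * (-(τ : ℂ))) *
        Complex.exp (-z * (τ : ℂ)) := by
  funext z; exact (charFn_hasDerivAt ε a b τ z).deriv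

lemma charFn_deriv2 (ε a b τ : ℝ) :
    iteratedDeriv 2 (charFn ε a b τ) 0 =
      2 + 2 * (a : ℂ) * (τ : ℂ) - (b : ℂ) * (τ : ℂ) ^ 2 := by
  rw [iteratedDeriv_succ, iteratedDeriv_one, charFn_deriv]
  have hexp : HasDerivAt (fun w : ℂ => Complex.exp (-w * (τ : ℂ)))
      (Complex.exp (-(0:ℂ) * (τ : ℂ)) * (-(τ : ℂ))) 0 := by
    have h1 : HasDerivAt (fun w : ℂ => -w * (τ : ℂ)) (-(τ : ℂ)) (0:ℂ) := by
      simpa using ((hasDerivAt_id (0:ℂ)).neg.mul_const (τ : ℂ))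
    simpa using h1.cexp
  have hlin : HasDerivAt (fun w : ℂ => (a : ℂ) + ((a : ℂ) * w + (b : ℂ)) * (-(τ : ℂ)))
      ((a : ℂ) * (-(τ : ℂ))) (0:ℂ) := by
    have := ((((hasDerivAt_id (0:ℂ)).const_mul (a : ℂ)).add_const (b : ℂ)).mul_const
      (-(τ : ℂ))).const_add (a : ℂ)
    simpa using this
  have hpoly : HasDerivAt (fun w : ℂ => 2 * w - (ε : ℂ)) (2 : ℂ) (0:ℂ) := by
    simpa using ((hasDerivAt_id (0:ℂ)).const_mul (2:ℂ)).sub_const (ε : ℂ)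
  have h := hpoly.sub (hlin.mul hexp)
  rw [show deriv (fun z : ℂ => 2 * z - (ε : ℂ) - ((a : ℂ) + ((a : ℂ) * z + (b : ℂ)) * (-(τ : ℂ))) *
      Complex.exp (-z * (τ : ℂ))) 0 = _ from h.deriv]
  simp
  ring

theorem double_zero_root (ε a b τ : ℝ) (hb : b = 1) (hτ : τ = ε + a) :
    iteratedDeriv 2 (charFn ε a b τ) 0 = 2 - ((ε : ℂ) ^ 2 - (a : ℂ) ^ 2) ∧
    charFn ε a b τ 0 = 0 ∧
    deriv (charFn ε a b τ) 0 = 0 ∧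
    (IsZeroOfOrderExactly (charFn ε a b τ) 0 2 ↔ ε ^ 2 - a ^ 2 ≠ 2) := by
  subst hb hτ
  have h2 : iteratedDeriv 2 (charFn ε a 1 (ε + a)) 0 = 2 - ((ε : ℂ) ^ 2 - (a : ℂ) ^ 2) := by
    rw [charFn_deriv2]; push_cast; ring
  have h0 : charFn ε a 1 (ε + a) 0 = 0 := by simp [charFn]
  have h1 : deriv (charFn ε a 1 (ε + a)) 0 = 0 := by
    rw [charFn_deriv]; push_cast; simp
  refine ⟨h2, h0, h1, ?_⟩
  constructor
  · rintro ⟨-, hne⟩ heq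
    apply hne
    rw [h2]
    have : ((ε : ℂ) ^ 2 - (a : ℂ) ^ 2) = 2 := by
      have := congrArg (fun x : ℝ => (x : ℂ)) heq
      push_cast at this
      linear_combination this
    rw [this]; ring
  · intro hne
    refine ⟨?_, ?_⟩
    · intro k hk
      interval_cases k
      · simpa [iteratedDeriv_zero] using h0
      · simpa [iteratedDeriv_one] using h1
    · rw [h2]
      intro h
      apply hne
      have : ((ε : ℝ) ^ 2 - a ^ 2 : ℂ) = 2 := by linear_combination -h
      exact_mod_cast this
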